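/- arXiv:2010.07374 — 2 statements merged into one kernel-verified Lean document; each statement's English description precedes it below -/
import Mathlib

section
/- For all integers m ≥ 2 and ℓ ≥ 1 with 2ℓ ≥ C(m, ⌊m/2⌋), there exist permutations σ⁽¹⁾, …, σ⁽ℓ⁾ of {1,…,m} such that every ⌊m/2⌋-element subset of {1,…,m} equals {σ⁽ⁱ⁾(1), …, σ⁽ⁱ⁾(⌊m/2⌋)} or {σ⁽ⁱ⁾(m−⌊m/2⌋+1), …, σ⁽ⁱ⁾(m)} for some i ∈ {1,…,ℓ}. -/
set_option linter.unusedSectionVars false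
set_option linter.unusedVariables false

/-- The prefix-set of length `j` of a permutation `σ` of `{1, …, m}` (coded by
`Fin m`): the set `{σ 1, …, σ j}` of images of the first `j` positions. -/
def prefixSet (m : ℕ) (σ : Equiv.Perm (Fin m)) (j : ℕ) : Finset (Fin m) :=
  (Finset.univ.filter (fun i : Fin m => (i : ℕ) < j)).image σ

/-- The suffix-set of length `j` of a permutation `σ` of `{1, …, m}` (coded by
`Fin m`): the set `{σ (m - j + 1), …, σ m}` of images of the last `j` positions. -/
def suffixSet (m : ℕ) (σ : Equiv.Perm (Fin m)) (j : ℕ) : Finset (Fin m) :=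
  (Finset.univ.filter (fun i : Fin m => m - j ≤ (i : ℕ))).image σ


open Finset

section MatchingMachine

variable {V : Type*} [Fintype V] [DecidableEq V]

/-- A (partial) matching encoded as an involution: unmatched vertices are fixed points,
matched vertices are swapped with their partner, which must be adjacent. -/
def MValid (adj : V → V → Prop) (f : V → V) : Prop :=
  Function.Involutive f ∧ ∀ v, f v ≠ v → adj v (f v)

/-- the set of covered (matched) vertices -/
noncomputable def mcov (f : V → V) : Finset V :=
  @Finset.filter _ (fun v => f v ≠ v) (Classical.decPred _) Finset.univ

lemma mem_mcov {f : V → V} {v : V} : v ∈ mcov f ↔ f v ≠ v := by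
  simp [mcov]

lemma not_mem_mcov {f : V → V} {v : V} : v ∉ mcov f ↔ f v = v := by
  simp [mcov]

variable {adj : V → V → Prop}

lemma MValid.inj {f : V → V} (hf : MValid adj f) : Function.Injective f :=
  hf.1.injective

/-- add an edge between two unmatched vertices -/
def addE (f : V → V) (a b : V) : V → V :=
  fun x => if x = a then b else if x = b then a else f x

lemma addE_spec {f : V → V} (hf : MValid adj f) {a b : V}
    (hsym : ∀ u v, adj u v → adj v u)
    (ha : f a = a) (hb : f b = b) (hab : a ≠ b) (hadj : adj a b) :
    MValid adj (addE f a b) ∧ mcov (addE f a b) = insert a (insert b (mcov f)) := by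
  have key : ∀ x, x ≠ a → x ≠ b → f x ≠ a ∧ f x ≠ b := by
    intro x hxa hxb
    constructor
    · intro h; apply hxa; rw [← hf.1 x, h, ha]
    · intro h; apply hxb; rw [← hf.1 x, h, hb]
  have vala : addE f a b a = b := by simp [addE]
  have valb : addE f a b b = a := by simp [addE, hab.symm]
  have valo : ∀ x, x ≠ a → x ≠ b → addE f a b x = f x := by
    intro x hxa hxb; simp [addE, hxa, hxb]
  refine ⟨⟨?_, ?_⟩, ?_⟩
  · intro x
    by_cases hxa : x = a
    · subst hxa; rw [vala, valb]
    · by_cases hxb : x = b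
      · subst hxb; rw [valb, vala]
      · rw [valo x hxa hxb, valo _ (key x hxa hxb).1 (key x hxa hxb).2, hf.1]
  · intro x hx
    by_cases hxa : x = a
    · subst hxa; rw [vala]; exact hadj
    · by_cases hxb : x = b
      · subst hxb; rw [valb]; exact hsym _ _ hadj
      · rw [valo x hxa hxb] at hx ⊢; exact hf.2 x hx
  · ext x
    simp only [mem_mcov, mem_insert]
    by_cases hxa : x = a
    · subst hxa; rw [vala]; simp [Ne.symm hab]
    · by_cases hxb : x = b
      · subst hxb; rw [valb]; simp [hab, hxa]
      · rw [valo x hxa hxb]; simp [hxa, hxb, mem_mcov]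

/-- delete the edge at a matched vertex `a` -/
def delE (f : V → V) (a : V) : V → V :=
  fun x => if x = a then a else if x = f a then f a else f x

lemma delE_spec {f : V → V} (hf : MValid adj f) {a : V} (ha : f a ≠ a) :
    MValid adj (delE f a) ∧ mcov (delE f a) = (mcov f) \ {a, f a} := by
  have key : ∀ x, x ≠ a → x ≠ f a → f x ≠ a ∧ f x ≠ f a := by
    intro x hxa hxb
    constructor
    · intro h; apply hxb; rw [← hf.1 x, h]
    · intro h; apply hxa; have := hf.inj h; rw [this]
  have vala : delE f a a = a := by simp [delE]
  have valb : delE f a (f a) = f a := by simp [delE, ha]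
  have valo : ∀ x, x ≠ a → x ≠ f a → delE f a x = f x := by
    intro x hxa hxb; simp [delE, hxa, hxb]
  refine ⟨⟨?_, ?_⟩, ?_⟩
  · intro x
    by_cases hxa : x = a
    · subst hxa; rw [vala, vala]
    · by_cases hxb : x = f a
      · subst hxb; rw [valb, valb]
      · rw [valo x hxa hxb, valo _ (key x hxa hxb).1 (key x hxa hxb).2, hf.1]
  · intro x hx
    by_cases hxa : x = a
    · subst hxa; rw [vala] at hx; exact absurd rfl hx
    · by_cases hxb : x = f a
      · subst hxb; rw [valb] at hx; exact absurd rfl hx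
      · rw [valo x hxa hxb] at hx ⊢; exact hf.2 x hx
  · ext x
    simp only [mem_mcov, mem_sdiff, mem_insert, mem_singleton]
    by_cases hxa : x = a
    · subst hxa; rw [vala]; simp
    · by_cases hxb : x = f a
      · subst hxb; rw [valb]; simp
      · rw [valo x hxa hxb]; simp [hxa, hxb, mem_mcov]

/-- rewire: `w` matched to `w'`, `w''` free; free `w` and match `w'` with `w''`. -/
def reatE (f : V → V) (w w' w'' : V) : V → V :=
  fun x => if x = w then w else if x = w' then w'' else if x = w'' then w' else f x

lemma reatE_spec {f : V → V} (hf : MValid adj f) {w w' w'' : V}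
    (hsym : ∀ u v, adj u v → adj v u)
    (hw : f w = w') (hww' : w ≠ w') (h2 : f w'' = w'') (hw''w : w'' ≠ w)
    (hw''w' : w'' ≠ w') (hadj : adj w' w'') :
    MValid adj (reatE f w w' w'') ∧ (reatE f w w' w'') w = w ∧
      (∀ x, x ≠ w → x ≠ w' → x ≠ w'' → reatE f w w' w'' x = f x) ∧
      mcov (reatE f w w' w'') = insert w'' (mcov f) \ {w} := by
  have hw' : f w' = w := by rw [← hw, hf.1]
  have key : ∀ x, x ≠ w → x ≠ w' → x ≠ w'' → f x ≠ w ∧ f x ≠ w' ∧ f x ≠ w'' := by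
    intro x h1 h2' h3
    refine ⟨?_, ?_, ?_⟩
    · intro h; apply h2'; rw [← hf.1 x, h, hw]
    · intro h; apply h1; rw [← hf.1 x, h, hw']
    · intro h; apply h3; rw [← hf.1 x, h, h2]
  have v1 : reatE f w w' w'' w = w := by simp [reatE]
  have v2 : reatE f w w' w'' w' = w'' := by simp [reatE, hww'.symm]
  have v3 : reatE f w w' w'' w'' = w' := by simp [reatE, hw''w, hw''w']
  have vo : ∀ x, x ≠ w → x ≠ w' → x ≠ w'' → reatE f w w' w'' x = f x := by
    intro x h1 h2' h3; simp [reatE, h1, h2', h3]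
  refine ⟨⟨?_, ?_⟩, v1, vo, ?_⟩
  · intro x
    by_cases hx1 : x = w
    · subst hx1; rw [v1, v1]
    · by_cases hx2 : x = w'
      · subst hx2; rw [v2, v3]
      · by_cases hx3 : x = w''
        · subst hx3; rw [v3, v2]
        · obtain ⟨k1, k2, k3⟩ := key x hx1 hx2 hx3
          rw [vo x hx1 hx2 hx3, vo _ k1 k2 k3, hf.1]
  · intro x hx
    by_cases hx1 : x = w
    · subst hx1; rw [v1] at hx; exact absurd rfl hx
    · by_cases hx2 : x = w'
      · subst hx2; rw [v2]; exact hadj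
      · by_cases hx3 : x = w''
        · subst hx3; rw [v3]; exact hsym _ _ hadj
        · rw [vo x hx1 hx2 hx3] at hx ⊢; exact hf.2 x hx
  · ext x
    simp only [mem_sdiff, mem_insert, mem_singleton, mem_mcov]
    by_cases hx1 : x = w
    · subst hx1; rw [v1]; simp
    · by_cases hx2 : x = w'
      · subst hx2; rw [v2]
        exact iff_of_true hw''w' ⟨Or.inr (by rw [hw']; exact hww'), Ne.symm hww'⟩
      · by_cases hx3 : x = w''
        · subst hx3; rw [v3]
          exact iff_of_true (Ne.symm hw''w') ⟨Or.inl rfl, hw''w⟩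
        · rw [vo x hx1 hx2 hx3]
          simp [hx1, hx3, mem_mcov]

end MatchingMachine

section Beta

variable {V : Type*} [Fintype V] [DecidableEq V] {adj : V → V → Prop}

open Finset

lemma beta (hsym : ∀ u v, adj u v → adj v u) :
    ∀ n : ℕ, ∀ g : V → V, (mcov g).card = n → ∀ f : V → V, MValid adj f → MValid adj g →
    ∀ w : V, ∀ R : Finset V, f w ≠ w → g w = w →
    (∀ x ∈ R, g x = x) → (∀ x ∈ R, f x ∈ R) → w ∉ R → f w ∉ R →
    (∃ g' z, MValid adj g' ∧ g z = z ∧ z ≠ w ∧ z ∉ R ∧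
        mcov g' = insert w (insert z (mcov g))) ∨
    (∃ f' z, MValid adj f' ∧ f z = z ∧ z ≠ w ∧ z ∉ R ∧ f' w = w ∧
        (∀ x ∈ R, f' x = f x) ∧ mcov f' = insert z (mcov f) \ {w}) := by
  intro n
  induction n using Nat.strong_induction_on with
  | _ n IH =>
  intro g hg f hf hgv w R hfw hgww hgR hfR hwR hfwR
  obtain ⟨w', hw'⟩ : ∃ w', f w = w' := ⟨f w, rfl⟩
  have hww' : w ≠ w' := by rw [← hw']; exact Ne.symm hfw
  have hfw' : f w' = w := by rw [← hw', hf.1]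
  have hadjww' : adj w w' := by rw [← hw']; exact hf.2 w hfw
  have hw'R : w' ∉ R := by rw [← hw']; exact hfwR
  by_cases hgw' : g w' = w'
  · -- base case (1): augment g by the edge (w, w')
    obtain ⟨hv, hc⟩ := addE_spec (adj := adj) hgv hsym hgww hgw' hww' hadjww'
    exact Or.inl ⟨addE g w w', w', hv, hgw', Ne.symm hww', hw'R, hc⟩
  · obtain ⟨w'', hw''⟩ : ∃ w'', g w' = w'' := ⟨g w', rfl⟩
    have hgw'' : g w'' = w' := by rw [← hw'', hgv.1]
    have hw''w' : w'' ≠ w' := by rw [← hw'']; exact hgw'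
    have hw''w : w'' ≠ w := by
      intro h; rw [h, hgww] at hgw''; exact hww' hgw''
    have hw''R : w'' ∉ R := by
      intro hR
      have := hgR w'' hR
      rw [hgw''] at this
      exact hw''w' this.symm
    have hadjw'w'' : adj w' w'' := by rw [← hw'']; exact hgv.2 w' hgw'
    by_cases hfw'' : f w'' = w''
    · -- base case (2): rewire f : free w, match w' with w''
      obtain ⟨hv, hfix, hagree, hc⟩ :=
        reatE_spec (adj := adj) hf hsym hw' hww' hfw'' hw''w hw''w' hadjw'w''
      refine Or.inr ⟨reatE f w w' w'', w'', hv, hfw'', hw''w, hw''R, hfix, ?_, hc⟩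
      intro x hx
      exact hagree x (fun h => hwR (h ▸ hx)) (fun h => hw'R (h ▸ hx))
        (fun h => hw''R (h ▸ hx))
    · -- recursive case
      obtain ⟨hgtv, hgtcov⟩ := delE_spec (adj := adj) hgv (a := w') hgw'
      rw [hw''] at hgtcov
      have hgtw'' : delE g w' w'' = w'' := by
        unfold delE
        rw [if_neg hw''w', if_pos hw''.symm, hw'']
      have hw'cov : w' ∈ mcov g := mem_mcov.2 hgw'
      have hw''cov : w'' ∈ mcov g := mem_mcov.2 (by rw [hgw'']; exact Ne.symm hw''w')
      have hsub : ({w', w''} : Finset V) ⊆ mcov g := by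
        intro x hx
        rcases Finset.mem_insert.1 hx with h | h
        · exact h ▸ hw'cov
        · exact (Finset.mem_singleton.1 h) ▸ hw''cov
      have hcard2 : ({w', w''} : Finset V).card = 2 := by
        rw [Finset.card_insert_of_notMem (by simp [Ne.symm hw''w']), Finset.card_singleton]
      have hn2 : 2 ≤ n := by
        rw [← hg, ← hcard2]; exact Finset.card_le_card hsub
      have hcardt : (mcov (delE g w')).card = n - 2 := by
        rw [hgtcov, Finset.card_sdiff_of_subset hsub, hcard2, hg]
      -- hypotheses for the recursive call
      have hR'g : ∀ x ∈ insert w (insert w' R), delE g w' x = x := by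
        intro x hx
        unfold delE
        rcases Finset.mem_insert.1 hx with h | h
        · subst h
          rw [if_neg hww', if_neg (by rw [hw'']; exact Ne.symm hw''w), hgww]
        · rcases Finset.mem_insert.1 h with h' | h'
          · subst h'; rw [if_pos rfl]
          · rw [if_neg (show x ≠ w' from fun hh => hw'R (hh ▸ h')),
              if_neg (show x ≠ g w' from by rw [hw'']; exact fun hh => hw''R (hh ▸ h')), hgR x h']
      have hR'f : ∀ x ∈ insert w (insert w' R), f x ∈ insert w (insert w' R) := by
        intro x hx
        rcases Finset.mem_insert.1 hx with h | h
        · subst h; rw [hw']; exact Finset.mem_insert_of_mem (Finset.mem_insert_self _ _)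
        · rcases Finset.mem_insert.1 h with h' | h'
          · subst h'; rw [hfw']; exact Finset.mem_insert_self _ _
          · exact Finset.mem_insert_of_mem (Finset.mem_insert_of_mem (hfR x h'))
      have hw''R' : w'' ∉ insert w (insert w' R) := by
        simp only [Finset.mem_insert, not_or]
        exact ⟨hw''w, hw''w', hw''R⟩
      have hfw''R' : f w'' ∉ insert w (insert w' R) := by
        simp only [Finset.mem_insert, not_or]
        refine ⟨?_, ?_, ?_⟩
        · intro h
          have : w'' = w' := by rw [← hf.1 w'', h, hw']
          exact hw''w' this
        · intro h
          have : w'' = w := by rw [← hf.1 w'', h, hfw']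
          exact hw''w this
        · intro h
          have := hfR _ h
          rw [hf.1] at this
          exact hw''R this
      have IHres := IH (n - 2) (by omega) (delE g w') hcardt f hf hgtv w''
        (insert w (insert w' R)) hfw'' hgtw'' hR'g hR'f hw''R' hfw''R'
      rcases IHres with ⟨g1, z, hg1v, hgtz, hzw'', hzR', hg1cov⟩ |
        ⟨f1, z, hf1v, hfz, hzw'', hzR', hf1w'', hf1agree, hf1cov⟩
      · -- lift case (1)
        have hzw : z ≠ w := fun h => hzR' (h ▸ Finset.mem_insert_self _ _)
        have hzw' : z ≠ w' :=
          fun h => hzR' (h ▸ Finset.mem_insert_of_mem (Finset.mem_insert_self _ _))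
        have hzR : z ∉ R :=
          fun h => hzR' (Finset.mem_insert_of_mem (Finset.mem_insert_of_mem h))
        have hgz : g z = z := by
          have hh := hgtz
          unfold delE at hh
          rwa [if_neg hzw', if_neg (by rw [hw'']; exact hzw'')] at hh
        have hg1w : g1 w = w := by
          rw [← not_mem_mcov, hg1cov, hgtcov]
          intro hmem
          rcases Finset.mem_insert.1 hmem with h | h
          · exact hw''w h.symm
          rcases Finset.mem_insert.1 h with h' | h'
          · exact hzw h'.symm
          · exact (not_mem_mcov.2 hgww) (Finset.mem_sdiff.1 h').1
        have hg1w' : g1 w' = w' := by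
          rw [← not_mem_mcov, hg1cov, hgtcov]
          intro hmem
          rcases Finset.mem_insert.1 hmem with h | h
          · exact hw''w' h.symm
          rcases Finset.mem_insert.1 h with h' | h'
          · exact hzw' h'.symm
          · exact (Finset.mem_sdiff.1 h').2 (Finset.mem_insert_self _ _)
        obtain ⟨hv2, hc2⟩ := addE_spec (adj := adj) hg1v hsym hg1w hg1w' hww' hadjww'
        refine Or.inl ⟨addE g1 w w', z, hv2, hgz, hzw, hzR, ?_⟩
        rw [hc2, hg1cov, hgtcov]
        ext x
        simp only [Finset.mem_insert, Finset.mem_sdiff, Finset.mem_singleton]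
        constructor
        · rintro (rfl | rfl | rfl | rfl | ⟨hx, -⟩)
          · exact Or.inl rfl
          · exact Or.inr (Or.inr hw'cov)
          · exact Or.inr (Or.inr hw''cov)
          · exact Or.inr (Or.inl rfl)
          · exact Or.inr (Or.inr hx)
        · rintro (rfl | rfl | hx)
          · exact Or.inl rfl
          · exact Or.inr (Or.inr (Or.inr (Or.inl rfl)))
          · by_cases h1 : x = w'
            · exact Or.inr (Or.inl h1)
            · by_cases h2 : x = w''
              · exact Or.inr (Or.inr (Or.inl h2))
              · exact Or.inr (Or.inr (Or.inr (Or.inr ⟨hx, not_or.mpr ⟨h1, h2⟩⟩)))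
      · -- lift case (2)
        have hzw : z ≠ w := fun h => hzR' (h ▸ Finset.mem_insert_self _ _)
        have hzw' : z ≠ w' :=
          fun h => hzR' (h ▸ Finset.mem_insert_of_mem (Finset.mem_insert_self _ _))
        have hzR : z ∉ R :=
          fun h => hzR' (Finset.mem_insert_of_mem (Finset.mem_insert_of_mem h))
        have hf1w : f1 w = w' := by
          rw [hf1agree w (Finset.mem_insert_self _ _), hw']
        obtain ⟨hv3, hfix3, hagree3, hc3⟩ :=
          reatE_spec (adj := adj) hf1v hsym hf1w hww' hf1w'' hw''w hw''w' hadjw'w''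
        refine Or.inr ⟨reatE f1 w w' w'', z, hv3, hfz, hzw, hzR, hfix3, ?_, ?_⟩
        · intro x hx
          rw [hagree3 x (fun h => hwR (h ▸ hx)) (fun h => hw'R (h ▸ hx))
              (fun h => hw''R (h ▸ hx)),
            hf1agree x (Finset.mem_insert_of_mem (Finset.mem_insert_of_mem hx))]
        · rw [hc3, hf1cov]
          have hw''covf : w'' ∈ mcov f := mem_mcov.2 hfw''
          ext x
          simp only [Finset.mem_insert, Finset.mem_sdiff, Finset.mem_singleton]
          constructor
          · rintro ⟨rfl | ⟨rfl | hx, -⟩, hxw⟩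
            · exact ⟨Or.inr hw''covf, hxw⟩
            · exact ⟨Or.inl rfl, hxw⟩
            · exact ⟨Or.inr hx, hxw⟩
          · rintro ⟨rfl | hx, hxw⟩
            · exact ⟨Or.inr ⟨Or.inl rfl, hzw''⟩, hxw⟩
            · by_cases h2 : x = w''
              · exact ⟨Or.inl h2, hxw⟩
              · exact ⟨Or.inr ⟨Or.inr hx, h2⟩, hxw⟩

end Beta

section Reach

variable {V : Type*}

def reachN (adj : V → V → Prop) : ℕ → V → V → Prop
  | 0, u, v => u = v
  | n+1, u, v => ∃ x, adj u x ∧ reachN adj n x v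

lemma reachN_trans {adj : V → V → Prop} {n₁ n₂ : ℕ} {u x v : V}
    (h1 : reachN adj n₁ u x) (h2 : reachN adj n₂ x v) : reachN adj (n₁ + n₂) u v := by
  induction n₁ generalizing u with
  | zero =>
    have : u = x := h1
    rw [Nat.zero_add]; exact this ▸ h2
  | succ n ih =>
    obtain ⟨y, hy, hr⟩ := h1
    rw [Nat.succ_add]
    exact ⟨y, hy, ih hr⟩

lemma reachN_symm {adj : V → V → Prop} (hsym : ∀ u v, adj u v → adj v u) {n : ℕ} {u v : V}
    (h : reachN adj n u v) : reachN adj n v u := by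
  induction n generalizing u v with
  | zero => exact (h : u = v).symm
  | succ n ih =>
    obtain ⟨x, hux, hr⟩ := h
    have h1 : reachN adj n v x := ih hr
    have h2 : reachN adj 1 x u := ⟨u, hsym _ _ hux, rfl⟩
    exact reachN_trans h1 h2

end Reach

section Gallai

open Finset

variable {V : Type*} [Fintype V] [DecidableEq V]

theorem gallai_near_matching (adj : V → V → Prop)
    (hsym : ∀ u v, adj u v → adj v u) (hirr : ∀ v, ¬adj v v)
    (hconn : ∀ u v : V, ∃ n, reachN adj n u v)
    (htrans : ∀ u v : V, ∃ e : V ≃ V, (∀ x y, adj (e x) (e y) ↔ adj x y) ∧ e u = v) :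
    ∃ f : V → V, MValid adj f ∧ Fintype.card V ≤ (mcov f).card + 1 := by
  classical
  set S : Finset (V → V) := Finset.filter (fun f => MValid adj f) Finset.univ with hS
  have hSne : S.Nonempty :=
    ⟨id, Finset.mem_filter.2 ⟨Finset.mem_univ _, ⟨fun x => rfl, fun v h => absurd rfl h⟩⟩⟩
  obtain ⟨f₀, hf₀S, hmaxS⟩ := Finset.exists_max_image S (fun f => (mcov f).card) hSne
  have hf₀ : MValid adj f₀ := (Finset.mem_filter.1 hf₀S).2
  have hmax : ∀ g, MValid adj g → (mcov g).card ≤ (mcov f₀).card := fun g hg =>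
    hmaxS g (Finset.mem_filter.2 ⟨Finset.mem_univ _, hg⟩)
  refine ⟨f₀, hf₀, ?_⟩
  by_contra hcon
  push_neg at hcon
  have h2 : 1 < (Finset.univ \ mcov f₀).card := by
    rw [Finset.card_sdiff_of_subset (Finset.subset_univ _), Finset.card_univ]
    omega
  obtain ⟨u, hu, v, hv, huv⟩ := Finset.one_lt_card.1 h2
  have hfu : f₀ u = u := not_mem_mcov.1 (fun h => (Finset.mem_sdiff.1 hu).2 h)
  have hfv : f₀ v = v := not_mem_mcov.1 (fun h => (Finset.mem_sdiff.1 hv).2 h)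
  -- no maximum matching misses two adjacent vertices
  have haug : ∀ (g : V → V), MValid adj g → (mcov g).card = (mcov f₀).card →
      ∀ a b, g a = a → g b = b → a ≠ b → ¬adj a b := by
    intro g hg hgs a b ha hb hab hadj
    obtain ⟨hv', hc⟩ := addE_spec (adj := adj) hg hsym ha hb hab hadj
    have hle := hmax _ hv'
    rw [hc, Finset.card_insert_of_notMem, Finset.card_insert_of_notMem, hgs] at hle
    · omega
    · exact not_mem_mcov.2 hb
    · intro hmem
      rcases Finset.mem_insert.1 hmem with h | h
      · exact hab h
      · exact (not_mem_mcov.2 ha) h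
  set P : ℕ → Prop := fun nn => ∃ g a b, MValid adj g ∧ (mcov g).card = (mcov f₀).card ∧
    g a = a ∧ g b = b ∧ a ≠ b ∧ reachN adj nn a b with hPdef
  have hPex : ∃ nn, P nn := by
    obtain ⟨nn, hr⟩ := hconn u v
    exact ⟨nn, f₀, u, v, hf₀, rfl, hfu, hfv, huv, hr⟩
  obtain ⟨M, a, b, hM, hMs, hMa, hMb, hab, hrab⟩ := Nat.find_spec hPex
  have hn0 : 2 ≤ Nat.find hPex := by
    by_contra hn
    push_neg at hn
    interval_cases h : Nat.find hPex
    · exact hab hrab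
    · obtain ⟨x, hax, hx⟩ := hrab
      exact haug M hM hMs a b hMa hMb hab ((hx : x = b) ▸ hax)
  have hdec : ∃ w, adj a w ∧ reachN adj (Nat.find hPex - 1) w b := by
    have h1 : Nat.find hPex = (Nat.find hPex - 1) + 1 := by omega
    rw [h1] at hrab
    exact hrab
  obtain ⟨w, haw, hwb⟩ := hdec
  have hwa : w ≠ a := fun h => hirr a (h ▸ haw)
  have hwb' : w ≠ b := fun h => haug M hM hMs a b hMa hMb hab (h ▸ haw)
  have hMw : M w ≠ w := by
    intro h
    exact Nat.find_min hPex (by omega) ⟨M, w, b, hM, hMs, h, hMb, hwb', hwb⟩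
  obtain ⟨e, he, hea⟩ := htrans a w
  set Ng : V → V := fun x => e (M (e.symm x)) with hNgdef
  have hNgv : MValid adj Ng := by
    constructor
    · intro x
      show e (M (e.symm (e (M (e.symm x))))) = x
      rw [Equiv.symm_apply_apply, hM.1, Equiv.apply_symm_apply]
    · intro x hx
      have h1 : M (e.symm x) ≠ e.symm x := by
        intro h
        apply hx
        show e (M (e.symm x)) = x
        rw [h, Equiv.apply_symm_apply]
      have h2 : adj (e.symm x) (M (e.symm x)) := hM.2 _ h1
      have h3 := (he (e.symm x) (M (e.symm x))).2 h2
      rwa [Equiv.apply_symm_apply] at h3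
  have hNgcov : mcov Ng = (mcov M).image e := by
    ext x
    simp only [mem_mcov, Finset.mem_image]
    constructor
    · intro hx
      refine ⟨e.symm x, ?_, Equiv.apply_symm_apply _ _⟩
      intro h
      apply hx
      show e (M (e.symm x)) = x
      rw [h, Equiv.apply_symm_apply]
    · rintro ⟨y, hy, rfl⟩
      show e (M (e.symm (e y))) ≠ e y
      rw [Equiv.symm_apply_apply]
      exact fun h => hy (e.injective h)
  have hNgs : (mcov Ng).card = (mcov f₀).card := by
    rw [hNgcov, Finset.card_image_of_injective _ e.injective, hMs]
  have hNgw : Ng w = w := by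
    show e (M (e.symm w)) = w
    rw [← hea, Equiv.symm_apply_apply, hMa, hea]
  have hbeta := beta hsym ((mcov Ng).card) Ng rfl M hM hNgv w ∅ hMw hNgw
    (fun x hx => absurd hx (Finset.notMem_empty x))
    (fun x hx => absurd hx (Finset.notMem_empty x))
    (Finset.notMem_empty w) (Finset.notMem_empty (M w))
  rcases hbeta with ⟨g', z, hg'v, hNgz, hzw, -, hg'cov⟩ |
    ⟨f', z, hf'v, hMz, hzw, -, hf'w, -, hf'cov⟩
  · have hle := hmax g' hg'v
    rw [hg'cov, Finset.card_insert_of_notMem, Finset.card_insert_of_notMem, hNgs] at hle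
    · omega
    · exact not_mem_mcov.2 hNgz
    · intro hmem
      rcases Finset.mem_insert.1 hmem with h | h
      · exact hzw h.symm
      · exact (not_mem_mcov.2 hNgw) h
  · have hzcovf : z ∉ mcov M := not_mem_mcov.2 hMz
    have hwcovf : w ∈ mcov M := mem_mcov.2 hMw
    have hf's : (mcov f').card = (mcov f₀).card := by
      rw [hf'cov, Finset.card_sdiff_of_subset
        (Finset.singleton_subset_iff.2 (Finset.mem_insert_of_mem hwcovf)),
        Finset.card_insert_of_notMem hzcovf, Finset.card_singleton, hMs]
      omega
    by_cases hza : z = a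
    · have hf'b : f' b = b := by
        rw [← not_mem_mcov, hf'cov]
        intro hmem
        obtain ⟨h1, -⟩ := Finset.mem_sdiff.1 hmem
        rcases Finset.mem_insert.1 h1 with h | h
        · exact hab (hza ▸ h).symm
        · exact (not_mem_mcov.2 hMb) h
      exact Nat.find_min hPex (by omega)
        ⟨f', w, b, hf'v, hf's, hf'w, hf'b, hwb', hwb⟩
    · have hf'a : f' a = a := by
        rw [← not_mem_mcov, hf'cov]
        intro hmem
        obtain ⟨h1, -⟩ := Finset.mem_sdiff.1 hmem
        rcases Finset.mem_insert.1 h1 with h | h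
        · exact hza h.symm
        · exact (not_mem_mcov.2 hMa) h
      exact Nat.find_min hPex (m := 1) (by omega)
        ⟨f', a, w, hf'v, hf's, hf'a, hf'w, Ne.symm hwa,
          show ∃ x, adj a x ∧ reachN adj 0 x w from ⟨w, haw, rfl⟩⟩

end Gallai

section PermBuild

open Finset

variable {m : ℕ}

lemma exists_perm_maps (S T A B : Finset (Fin m)) (hST : Disjoint S T) (hAB : Disjoint A B)
    (h1 : S.card = A.card) (h2 : T.card = B.card) :
    ∃ σ : Equiv.Perm (Fin m), S.image σ = A ∧ T.image σ = B := by
  classical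
  have hU : (Finset.univ \ (S ∪ T)).card = (Finset.univ \ (A ∪ B)).card := by
    rw [Finset.card_sdiff_of_subset (Finset.subset_univ _), Finset.card_sdiff_of_subset (Finset.subset_univ _),
      Finset.card_union_of_disjoint hST, Finset.card_union_of_disjoint hAB, h1, h2]
  have e1 : ↥S ≃ ↥A := Fintype.equivOfCardEq (by rw [Fintype.card_coe, Fintype.card_coe, h1])
  have e2 : ↥T ≃ ↥B := Fintype.equivOfCardEq (by rw [Fintype.card_coe, Fintype.card_coe, h2])
  have e3 : ↥(Finset.univ \ (S ∪ T)) ≃ ↥(Finset.univ \ (A ∪ B)) :=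
    Fintype.equivOfCardEq (by rw [Fintype.card_coe, Fintype.card_coe, hU])
  set F : Fin m → Fin m := fun x =>
    if hx : x ∈ S then (e1 ⟨x, hx⟩ : Fin m)
    else if hx' : x ∈ T then (e2 ⟨x, hx'⟩ : Fin m)
    else (e3 ⟨x, by simp [Finset.mem_sdiff, hx, hx']⟩ : Fin m) with hFdef
  have hFS : ∀ x (hx : x ∈ S), F x ∈ A := by
    intro x hx
    simp only [hFdef, dif_pos hx]
    exact (e1 ⟨x, hx⟩).2
  have hFT : ∀ x, x ∉ S → x ∈ T → F x ∈ B := by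
    intro x hx hx'
    simp only [hFdef, dif_neg hx, dif_pos hx']
    exact (e2 ⟨x, hx'⟩).2
  have hFU : ∀ x, x ∉ S → x ∉ T → F x ∈ Finset.univ \ (A ∪ B) := by
    intro x hx hx'
    simp only [hFdef, dif_neg hx, dif_neg hx']
    exact (e3 _).2
  have hUA : ∀ y ∈ Finset.univ \ (A ∪ B), y ∉ A := by
    intro y hy
    exact fun h => (Finset.mem_sdiff.1 hy).2 (Finset.mem_union_left _ h)
  have hUB : ∀ y ∈ Finset.univ \ (A ∪ B), y ∉ B := by
    intro y hy
    exact fun h => (Finset.mem_sdiff.1 hy).2 (Finset.mem_union_right _ h)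
  have hinj : Function.Injective F := by
    intro x y hxy
    by_cases hxS : x ∈ S
    · by_cases hyS : y ∈ S
      · have := e1.injective (Subtype.coe_injective
          (by simpa only [hFdef, dif_pos hxS, dif_pos hyS] using hxy))
        exact congrArg Subtype.val this
      · by_cases hyT : y ∈ T
        · exact absurd (hxy ▸ hFS x hxS) (Finset.disjoint_left.1 hAB.symm (hFT y hyS hyT) ∘
            fun h => h)
        · exact absurd (hxy ▸ hFS x hxS) (hUA _ (hFU y hyS hyT))
    · by_cases hxT : x ∈ T
      · by_cases hyS : y ∈ S
        · exact absurd (hxy ▸ hFT x hxS hxT) (Finset.disjoint_left.1 hAB (hFS y hyS) ∘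
            fun h => h)
        · by_cases hyT : y ∈ T
          · have := e2.injective (Subtype.coe_injective
              (by simpa only [hFdef, dif_neg hxS, dif_pos hxT, dif_neg hyS, dif_pos hyT]
                using hxy))
            exact congrArg Subtype.val this
          · exact absurd (hxy ▸ hFT x hxS hxT) (hUB _ (hFU y hyS hyT))
      · by_cases hyS : y ∈ S
        · exact absurd (hxy ▸ hFU x hxS hxT) (fun hc => (hUA _ hc) (hFS y hyS))
        · by_cases hyT : y ∈ T
          · exact absurd (hxy ▸ hFU x hxS hxT) (fun hc => (hUB _ hc) (hFT y hyS hyT))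
          · have := e3.injective (Subtype.coe_injective
              (by simpa only [hFdef, dif_neg hxS, dif_neg hxT, dif_neg hyS, dif_neg hyT]
                using hxy))
            exact congrArg Subtype.val this
  set σ : Equiv.Perm (Fin m) := Equiv.ofBijective F (Finite.injective_iff_bijective.1 hinj)
    with hσdef
  have hσ : ∀ x, σ x = F x := fun x => rfl
  constructor
  case w => exact σ
  constructor
  · apply Finset.eq_of_subset_of_card_le
    · intro y hy
      obtain ⟨x, hx, rfl⟩ := Finset.mem_image.1 hy
      rw [hσ]
      exact hFS x hx
    · rw [Finset.card_image_of_injective _ σ.injective, h1]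
  · apply Finset.eq_of_subset_of_card_le
    · intro y hy
      obtain ⟨x, hx, rfl⟩ := Finset.mem_image.1 hy
      rw [hσ]
      exact hFT x (Finset.disjoint_right.1 hST hx) hx
    · rw [Finset.card_image_of_injective _ σ.injective, h2]

end PermBuild

section Kneser

open Finset

/-- vertices of the Kneser graph: `k`-subsets of `Fin m` -/
abbrev KV (m k : ℕ) := {A : Finset (Fin m) // A.card = k}

/-- Kneser adjacency : disjointness -/
def kadj {m k : ℕ} (u v : KV m k) : Prop := Disjoint u.1 v.1

lemma kadj_symm {m k : ℕ} : ∀ u v : KV m k, kadj u v → kadj v u :=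
  fun _ _ h => h.symm

lemma kadj_irrefl {m k : ℕ} (hk : 1 ≤ k) : ∀ u : KV m k, ¬kadj u u := by
  intro u h
  have h1 : u.1 = ∅ := by
    rw [← Finset.bot_eq_empty, ← disjoint_self]
    exact h
  have h2 := u.2
  rw [h1] at h2
  simp only [Finset.card_empty] at h2
  omega

lemma kneser_card (m k : ℕ) : Fintype.card (KV m k) = m.choose k := by
  classical
  rw [Fintype.card_subtype]
  have h1 : (Finset.univ.filter fun A : Finset (Fin m) => A.card = k) =
      Finset.powersetCard k Finset.univ := by
    ext A
    simp [Finset.mem_powersetCard_univ]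
  rw [h1, Finset.card_powersetCard, Finset.card_univ, Fintype.card_fin]

lemma kneser_trans {m k : ℕ} (u v : KV m k) :
    ∃ e : KV m k ≃ KV m k, (∀ x y : KV m k, kadj (e x) (e y) ↔ kadj x y) ∧ e u = v := by
  classical
  obtain ⟨π, hπ, -⟩ := exists_perm_maps u.1 ∅ v.1 ∅ (Finset.disjoint_empty_right _)
    (Finset.disjoint_empty_right _) (u.2.trans v.2.symm) rfl
  have hcard : ∀ (a : KV m k) (ρ : Equiv.Perm (Fin m)), (a.1.image ρ).card = k := by
    intro a ρ
    rw [Finset.card_image_of_injective _ ρ.injective, a.2]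
  have hinv : ∀ (a : Finset (Fin m)) (ρ : Equiv.Perm (Fin m)),
      (a.image ρ).image ρ.symm = a := by
    intro a ρ
    rw [Finset.image_image]
    have : (⇑ρ.symm ∘ ⇑ρ) = id := funext fun x => ρ.symm_apply_apply x
    rw [this, Finset.image_id]
  have hinv' : ∀ (a : Finset (Fin m)) (ρ : Equiv.Perm (Fin m)),
      (a.image ρ.symm).image ρ = a := by
    intro a ρ
    rw [Finset.image_image]
    have : (⇑ρ ∘ ⇑ρ.symm) = id := funext fun x => ρ.apply_symm_apply x
    rw [this, Finset.image_id]
  refine ⟨⟨fun a => ⟨a.1.image π, hcard a π⟩, fun a => ⟨a.1.image π.symm, hcard a π.symm⟩,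
    fun a => Subtype.ext (hinv a.1 π), fun a => Subtype.ext (hinv' a.1 π)⟩, ?_, ?_⟩
  · intro x y
    show Disjoint (x.1.image π) (y.1.image π) ↔ Disjoint x.1 y.1
    constructor
    · intro h
      rw [Finset.disjoint_left]
      intro t ht ht'
      exact Finset.disjoint_left.1 h (Finset.mem_image_of_mem _ ht)
        (Finset.mem_image_of_mem _ ht')
    · intro h
      rw [Finset.disjoint_left]
      rintro t ht ht'
      obtain ⟨x', hx', rfl⟩ := Finset.mem_image.1 ht
      obtain ⟨y', hy', he⟩ := Finset.mem_image.1 ht'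
      have : y' = x' := π.injective he
      exact Finset.disjoint_left.1 h hx' (this ▸ hy')
  · exact Subtype.ext hπ

lemma kneser_conn {m k : ℕ} (hm : m = 2 * k + 1) (hk : 1 ≤ k) :
    ∀ r : ℕ, ∀ u v : KV m k, (v.1 \ u.1).card = r → ∃ n, reachN kadj n u v := by
  intro r
  induction r with
  | zero =>
    intro u v hr
    have h1 : v.1 ⊆ u.1 := by
      rw [← Finset.sdiff_eq_empty_iff_subset]
      exact Finset.card_eq_zero.1 hr
    have h2 : v.1 = u.1 := Finset.eq_of_subset_of_card_le h1 (by rw [u.2, v.2])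
    exact ⟨0, show u = v from Subtype.ext h2.symm⟩
  | succ r ih =>
    intro u v hr
    have hbne : (v.1 \ u.1).Nonempty := Finset.card_pos.1 (by omega)
    obtain ⟨b, hb⟩ := hbne
    have hane : (u.1 \ v.1).Nonempty := by
      rw [← Finset.card_pos, Finset.card_sdiff_comm (u.2.trans v.2.symm)]
      omega
    obtain ⟨a, ha⟩ := hane
    have hbu : b ∉ u.1 := (Finset.mem_sdiff.1 hb).2
    have hbv : b ∈ v.1 := (Finset.mem_sdiff.1 hb).1
    have hau : a ∈ u.1 := (Finset.mem_sdiff.1 ha).1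
    have hav : a ∉ v.1 := (Finset.mem_sdiff.1 ha).2
    have hu'card : (insert b (u.1.erase a)).card = k := by
      rw [Finset.card_insert_of_notMem (fun h => hbu (Finset.mem_of_mem_erase h)),
        Finset.card_erase_of_mem hau, u.2]
      omega
    set u' : KV m k := ⟨insert b (u.1.erase a), hu'card⟩ with hu'def
    have hCcard : (Finset.univ \ insert b u.1).card = k := by
      rw [Finset.card_sdiff_of_subset (Finset.subset_univ _), Finset.card_univ, Fintype.card_fin,
        Finset.card_insert_of_notMem hbu, u.2]
      omega
    set C : KV m k := ⟨Finset.univ \ insert b u.1, hCcard⟩ with hCdef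
    have hadj1 : kadj u C := by
      show Disjoint u.1 (Finset.univ \ insert b u.1)
      rw [Finset.disjoint_right]
      intro t ht
      exact fun htu => (Finset.mem_sdiff.1 ht).2 (Finset.mem_insert_of_mem htu)
    have hadj2 : kadj C u' := by
      show Disjoint (Finset.univ \ insert b u.1) (insert b (u.1.erase a))
      rw [Finset.disjoint_right]
      intro t ht
      intro htC
      apply (Finset.mem_sdiff.1 htC).2
      rcases Finset.mem_insert.1 ht with h | h
      · exact h ▸ Finset.mem_insert_self _ _
      · exact Finset.mem_insert_of_mem (Finset.mem_of_mem_erase h)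
    have hstep : reachN kadj 2 u u' :=
      ⟨C, hadj1, ⟨u', hadj2, rfl⟩⟩
    have hrec : (v.1 \ u'.1).card = r := by
      have hset : v.1 \ u'.1 = (v.1 \ u.1).erase b := by
        ext x
        simp only [Finset.mem_sdiff, Finset.mem_erase, Finset.mem_insert, not_or,
          Finset.mem_erase, hu'def]
        constructor
        · rintro ⟨hxv, hxb, hxe⟩
          refine ⟨hxb, hxv, fun hxu => hxe ⟨?_, hxu⟩⟩
          intro hxa
          exact hav (hxa ▸ hxv)
        · rintro ⟨hxb, hxv, hxu⟩
          exact ⟨hxv, hxb, fun hc => hxu hc.2⟩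
      rw [hset, Finset.card_erase_of_mem hb, hr]
      omega
    obtain ⟨n, hn⟩ := ih u' v hrec
    exact ⟨2 + n, reachN_trans hstep hn⟩

end Kneser

section Positions

open Finset

lemma prePos_card {m k : ℕ} (hkm : k ≤ m) :
    (Finset.univ.filter (fun i : Fin m => (i : ℕ) < k)).card = k := by
  have h : Finset.univ.filter (fun i : Fin m => (i : ℕ) < k) =
      Finset.univ.map (Fin.castLEEmb hkm) := by
    ext x
    simp only [Finset.mem_filter, Finset.mem_univ, true_and, Finset.mem_map]
    constructor
    · intro hx
      exact ⟨⟨x.1, hx⟩, Fin.ext rfl⟩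
    · rintro ⟨j, rfl⟩
      exact j.2
  rw [h, Finset.card_map, Finset.card_univ, Fintype.card_fin]

lemma sufPos_card {m k : ℕ} (hkm : k ≤ m) :
    (Finset.univ.filter (fun i : Fin m => m - k ≤ (i : ℕ))).card = k := by
  have hemb : Function.Injective (fun j : Fin k => (⟨m - k + j.1, by omega⟩ : Fin m)) := by
    intro j1 j2 hj
    have : m - k + j1.1 = m - k + j2.1 := congrArg Fin.val hj
    exact Fin.ext (by omega)
  have h : Finset.univ.filter (fun i : Fin m => m - k ≤ (i : ℕ)) =
      Finset.univ.map ⟨fun j : Fin k => (⟨m - k + j.1, by omega⟩ : Fin m), hemb⟩ := by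
    ext x
    simp only [Finset.mem_filter, Finset.mem_univ, true_and, Finset.mem_map,
      Function.Embedding.coeFn_mk]
    constructor
    · intro hx
      have hxm : x.1 < m := x.2
      refine ⟨⟨x.1 - (m - k), by omega⟩, Fin.ext ?_⟩
      show m - k + (x.1 - (m - k)) = x.1
      omega
    · rintro ⟨j, rfl⟩
      show m - k ≤ m - k + j.1
      omega
  rw [h, Finset.card_map, Finset.card_univ, Fintype.card_fin]

end Positions


section Final

open Finset

theorem exists_permutations_separating_half_subsets'
    (m ℓ : ℕ) (hm : 2 ≤ m) (hℓ : 1 ≤ ℓ) (h : m.choose (m / 2) ≤ 2 * ℓ) :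
    ∃ σ : Fin ℓ → Equiv.Perm (Fin m),
      ∀ A : Finset (Fin m), A.card = m / 2 →
        ∃ i : Fin ℓ, A = prefixSet m (σ i) (m / 2) ∨ A = suffixSet m (σ i) (m / 2) := by
  classical
  set k := m / 2 with hkdef
  have hk1 : 1 ≤ k := by omega
  have h2k : 2 * k ≤ m := by omega
  have hkm : k ≤ m := by omega
  -- Step 1: a near-perfect matching on the Kneser graph
  have hmatch : ∃ f : KV m k → KV m k, MValid kadj f ∧
      Fintype.card (KV m k) ≤ (mcov f).card + 1 := by
    rcases Nat.even_or_odd m with hme | hmo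
    · have hm0 : m % 2 = 0 := Nat.even_iff.1 hme
      have hmk : m = 2 * k := by omega
      have hcc : ∀ a : KV m k, (Finset.univ \ a.1).card = k := by
        intro a
        rw [Finset.card_sdiff_of_subset (Finset.subset_univ _), Finset.card_univ, Fintype.card_fin, a.2]
        omega
      refine ⟨fun a => ⟨Finset.univ \ a.1, hcc a⟩, ⟨?_, ?_⟩, ?_⟩
      · intro a
        apply Subtype.ext
        show Finset.univ \ (Finset.univ \ a.1) = a.1
        rw [Finset.sdiff_sdiff_self_left, Finset.univ_inter]
      · intro a _
        show Disjoint a.1 (Finset.univ \ a.1)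
        exact Finset.disjoint_sdiff
      · have hall : mcov (fun a : KV m k => (⟨Finset.univ \ a.1, hcc a⟩ : KV m k)) =
            Finset.univ := by
          ext a
          simp only [mem_mcov, Finset.mem_univ, iff_true]
          intro hfa
          have h1 : Finset.univ \ a.1 = a.1 := congrArg Subtype.val hfa
          have h2 : Disjoint a.1 (Finset.univ \ a.1) := Finset.disjoint_sdiff
          rw [h1] at h2
          have h3 : a.1 = ∅ := by
            rw [← Finset.bot_eq_empty, ← disjoint_self]
            exact h2
          have h4 := a.2
          rw [h3] at h4
          simp only [Finset.card_empty] at h4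
          omega
        rw [hall, Finset.card_univ]
        omega
    · have hm1 : m % 2 = 1 := Nat.odd_iff.1 hmo
      have hm2 : m = 2 * k + 1 := by omega
      exact gallai_near_matching kadj kadj_symm (kadj_irrefl hk1)
        (fun u v => kneser_conn hm2 hk1 ((v.1 \ u.1).card) u v rfl)
        (fun u v => kneser_trans u v)
  obtain ⟨f, hf, hfcov⟩ := hmatch
  have hN : Fintype.card (KV m k) = m.choose k := kneser_card m k
  -- Step 2: counting : pairs and missed vertices
  set enc := Fintype.equivFin (KV m k) with hencdef
  set P : Finset (KV m k) := Finset.univ.filter (fun a => f a ≠ a ∧ enc a < enc (f a))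
    with hPdef
  set Miss : Finset (KV m k) := Finset.univ.filter (fun a => f a = a) with hMissdef
  have hMissCompl : Miss = Finset.univ \ mcov f := by
    ext a
    simp only [hMissdef, Finset.mem_filter, Finset.mem_univ, true_and, Finset.mem_sdiff,
      mem_mcov, not_not]
  have hMiss1 : Miss.card ≤ 1 := by
    rw [hMissCompl, Finset.card_sdiff_of_subset (Finset.subset_univ _), Finset.card_univ]
    omega
  have himgcard : (P.image f).card = P.card := Finset.card_image_of_injective _ hf.1.injective
  have hsplitU : P ∪ P.image f ∪ Miss = Finset.univ := by
    ext a
    simp only [Finset.mem_union, Finset.mem_univ, iff_true, hPdef, hMissdef,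
      Finset.mem_filter, Finset.mem_image, true_and]
    by_cases hfa : f a = a
    · exact Or.inr hfa
    · by_cases hlt : enc a < enc (f a)
      · exact Or.inl (Or.inl ⟨hfa, hlt⟩)
      · refine Or.inl (Or.inr ⟨f a, ⟨⟨?_, ?_⟩, hf.1 a⟩⟩)
        · rw [hf.1 a]; exact Ne.symm hfa
        · rw [hf.1 a]
          exact lt_of_le_of_ne (not_lt.1 hlt) (fun hc => hfa (enc.injective hc))
  have hdisj1 : Disjoint (P ∪ P.image f) Miss := by
    rw [Finset.disjoint_left]
    intro a ha haM
    have hfa : f a = a := (Finset.mem_filter.1 haM).2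
    rcases Finset.mem_union.1 ha with h' | h'
    · exact (Finset.mem_filter.1 h').2.1 hfa
    · obtain ⟨b, hb, hba⟩ := Finset.mem_image.1 h'
      have hbne : f b ≠ b := (Finset.mem_filter.1 hb).2.1
      apply hbne
      rw [← hba, hf.1 b] at hfa
      exact hfa.symm
  have hdisj2 : Disjoint P (P.image f) := by
    rw [Finset.disjoint_left]
    intro a haP haI
    obtain ⟨b, hb, hba⟩ := Finset.mem_image.1 haI
    have h1 : enc a < enc (f a) := (Finset.mem_filter.1 haP).2.2
    have h2 : enc b < enc (f b) := (Finset.mem_filter.1 hb).2.2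
    rw [hba] at h2
    rw [← hba, hf.1 b, hba] at h1
    exact lt_asymm h1 h2
  have hcount : 2 * P.card + Miss.card = Fintype.card (KV m k) := by
    have h1 := congrArg Finset.card hsplitU
    rw [Finset.card_union_of_disjoint hdisj1, Finset.card_union_of_disjoint hdisj2,
      himgcard, Finset.card_univ] at h1
    omega
  set Q := P ∪ Miss with hQdef
  have hPQdisj : Disjoint P Miss := by
    rw [Finset.disjoint_left]
    intro a h1 h2
    exact (Finset.mem_filter.1 h1).2.1 (Finset.mem_filter.1 h2).2
  have hQcard : Q.card ≤ ℓ := by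
    rw [hQdef, Finset.card_union_of_disjoint hPQdisj]
    have hNle : 2 * P.card + Miss.card ≤ 2 * ℓ := by
      rw [hcount, hN]; exact h
    omega
  -- Step 3: partners and permutations
  have hpart : ∀ a : KV m k, ∃ b : KV m k, Disjoint a.1 b.1 := by
    intro a
    have hcompl : k ≤ (Finset.univ \ a.1).card := by
      rw [Finset.card_sdiff_of_subset (Finset.subset_univ _), Finset.card_univ, Fintype.card_fin, a.2]
      omega
    obtain ⟨B, hBsub, hBcard⟩ := Finset.exists_subset_card_eq hcompl
    refine ⟨⟨B, hBcard⟩, ?_⟩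
    rw [Finset.disjoint_right]
    intro t htB
    exact fun hta => (Finset.mem_sdiff.1 (hBsub htB)).2 hta
  set partner : KV m k → KV m k :=
    fun a => if _ : f a = a then Classical.choose (hpart a) else f a with hpartnerdef
  have hpartdisj : ∀ a, Disjoint a.1 (partner a).1 := by
    intro a
    show Disjoint a.1 ((if _ : f a = a then Classical.choose (hpart a) else f a)).1
    by_cases hfa : f a = a
    · rw [dif_pos hfa]
      exact Classical.choose_spec (hpart a)
    · rw [dif_neg hfa]
      exact hf.2 a hfa
  have hpartf : ∀ a, f a ≠ a → partner a = f a := by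
    intro a hfa
    show (if _ : f a = a then Classical.choose (hpart a) else f a) = f a
    rw [dif_neg hfa]
  set PrePos := Finset.univ.filter (fun i : Fin m => (i : ℕ) < k) with hPre
  set SufPos := Finset.univ.filter (fun i : Fin m => m - k ≤ (i : ℕ)) with hSuf
  have hPreCard : PrePos.card = k := prePos_card hkm
  have hSufCard : SufPos.card = k := sufPos_card hkm
  have hPreSuf : Disjoint PrePos SufPos := by
    rw [Finset.disjoint_left]
    intro i h1 h2
    have ha1 := (Finset.mem_filter.1 h1).2
    have ha2 := (Finset.mem_filter.1 h2).2
    omega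
  have hperm : ∀ a : KV m k, ∃ σ : Equiv.Perm (Fin m),
      prefixSet m σ k = a.1 ∧ suffixSet m σ k = (partner a).1 := by
    intro a
    obtain ⟨σ, h1, h2⟩ := exists_perm_maps PrePos SufPos a.1 (partner a).1 hPreSuf
      (hpartdisj a) (hPreCard.trans a.2.symm) (hSufCard.trans (partner a).2.symm)
    exact ⟨σ, h1, h2⟩
  set permOf : KV m k → Equiv.Perm (Fin m) := fun a => Classical.choose (hperm a)
    with hpermOf
  have hpermOfSpec : ∀ a : KV m k, prefixSet m (permOf a) k = a.1 ∧
      suffixSet m (permOf a) k = (partner a).1 := fun a => Classical.choose_spec (hperm a)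
  -- Step 4: the family of permutations
  set Qe := Q.equivFin with hQe
  set σs : Fin ℓ → Equiv.Perm (Fin m) := fun i =>
    if hi : (i : ℕ) < Q.card then permOf ((Qe.symm ⟨(i : ℕ), hi⟩) : {x // x ∈ Q}).1
    else 1 with hσs
  refine ⟨σs, ?_⟩
  have hcover : ∀ b : KV m k, b ∈ Q → ∃ i : Fin ℓ,
      prefixSet m (σs i) k = b.1 ∧ suffixSet m (σs i) k = (partner b).1 := by
    intro b hb
    have hjQ : ((Qe ⟨b, hb⟩ : Fin Q.card) : ℕ) < Q.card := (Qe ⟨b, hb⟩).2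
    have hjℓ : ((Qe ⟨b, hb⟩ : Fin Q.card) : ℕ) < ℓ := lt_of_lt_of_le hjQ hQcard
    refine ⟨⟨((Qe ⟨b, hb⟩ : Fin Q.card) : ℕ), hjℓ⟩, ?_⟩
    have hii : σs ⟨((Qe ⟨b, hb⟩ : Fin Q.card) : ℕ), hjℓ⟩ = permOf b := by
      rw [hσs]
      simp only []
      rw [dif_pos (show (((⟨((Qe ⟨b, hb⟩ : Fin Q.card) : ℕ), hjℓ⟩ : Fin ℓ)) : ℕ) < Q.card
        from hjQ)]
      have h1 : (⟨((Qe ⟨b, hb⟩ : Fin Q.card) : ℕ), hjQ⟩ : Fin Q.card) = Qe ⟨b, hb⟩ :=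
        Fin.ext rfl
      have h2 : (Qe.symm ⟨((Qe ⟨b, hb⟩ : Fin Q.card) : ℕ), hjQ⟩) = (⟨b, hb⟩ : {x // x ∈ Q}) := by
        rw [h1, Equiv.symm_apply_apply]
      rw [h2]
    rw [hii]
    exact hpermOfSpec b
  intro A hA
  set a : KV m k := ⟨A, hA⟩ with hadef
  by_cases haQ : a ∈ Q
  · obtain ⟨i, h1, -⟩ := hcover a haQ
    exact ⟨i, Or.inl h1.symm⟩
  · have hfa : f a ≠ a := by
      intro hc
      exact haQ (Finset.mem_union_right _ (Finset.mem_filter.2 ⟨Finset.mem_univ _, hc⟩))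
    have hnlt : ¬ enc a < enc (f a) := by
      intro hc
      exact haQ (Finset.mem_union_left _ (Finset.mem_filter.2 ⟨Finset.mem_univ _, hfa, hc⟩))
    have hbQ : f a ∈ Q := by
      apply Finset.mem_union_left
      refine Finset.mem_filter.2 ⟨Finset.mem_univ _, ?_, ?_⟩
      · rw [hf.1 a]; exact Ne.symm hfa
      · rw [hf.1 a]
        exact lt_of_le_of_ne (not_lt.1 hnlt) (fun hc => hfa (enc.injective hc))
    obtain ⟨i, -, h2⟩ := hcover (f a) hbQ
    have hpfa : partner (f a) = a := by
      rw [hpartf (f a) (by rw [hf.1 a]; exact Ne.symm hfa), hf.1 a]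
    refine ⟨i, Or.inr ?_⟩
    rw [h2, hpfa]

end Final

theorem exists_permutations_separating_half_subsets
    (m ℓ : ℕ) (hm : 2 ≤ m) (hℓ : 1 ≤ ℓ) (h : m.choose (m / 2) ≤ 2 * ℓ) :
    ∃ σ : Fin ℓ → Equiv.Perm (Fin m),
      ∀ A : Finset (Fin m), A.card = m / 2 →
        ∃ i : Fin ℓ, A = prefixSet m (σ i) (m / 2) ∨ A = suffixSet m (σ i) (m / 2) :=
  exists_permutations_separating_half_subsets' m ℓ hm hℓ h
end

section
/- Let m ≥ 4 and 2 ≤ k ≤ ⌊m/2⌋, and suppose σ⁽¹⁾, …, σ⁽ℓ⁾ are permutations of {1,…,m} such that for every j with k ≤ j ≤ ⌊m/2⌋, every j-element subset of {1,…,m} is the prefix-set of length j or the suffix-set of length j of some σ⁽ⁱ⁾. Then there exist permutations τ⁽¹⁾, …, τ⁽ℓ⁾ of {1,…,m} such that for every j with k−1 ≤ j ≤ ⌊m/2⌋, every j-element subset of {1,…,m} is the prefix-set of length j or the suffix-set of length j of some τ⁽ⁱ⁾. -/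
private lemma mem_image_perm {α : Type*} [DecidableEq α] (e : Equiv.Perm α) (F : Finset α)
    (z : α) : z ∈ F.image e ↔ e.symm z ∈ F := by
  constructor
  · intro h
    obtain ⟨x, hx, rfl⟩ := Finset.mem_image.mp h
    simpa using hx
  · intro h
    exact Finset.mem_image.mpr ⟨e.symm z, h, e.apply_symm_apply z⟩

private lemma image_swap_of_iff {α : Type*} [DecidableEq α] {x y : α} {F : Finset α}
    (h : x ∈ F ↔ y ∈ F) : F.image (Equiv.swap x y) = F := by
  ext z
  rw [mem_image_perm, Equiv.symm_swap]
  rcases eq_or_ne z x with rfl | hx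
  · rw [Equiv.swap_apply_left]; exact h.symm
  · rcases eq_or_ne z y with rfl | hy
    · rw [Equiv.swap_apply_right]; exact h
    · rw [Equiv.swap_apply_of_ne_of_ne hx hy]

private lemma swap_image_lt {m : ℕ} (k : ℕ) (hk : 1 ≤ k) (a p : Fin m)
    (ha : (a : ℕ) = k - 1) (hp : (p : ℕ) < k) :
    (Finset.univ.filter (fun i : Fin m => (i : ℕ) < k - 1)).image (Equiv.swap a p)
      = (Finset.univ.filter (fun i : Fin m => (i : ℕ) < k)) \ {p} := by
  ext z
  rw [mem_image_perm, Equiv.symm_swap]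
  simp only [Finset.mem_filter, Finset.mem_univ, true_and, Finset.mem_sdiff,
    Finset.mem_singleton]
  rcases eq_or_ne z p with rfl | hzp
  · rw [Equiv.swap_apply_right]
    constructor
    · intro h; exfalso; omega
    · rintro ⟨-, h⟩; exact absurd rfl h
  · rcases eq_or_ne z a with rfl | hza
    · rw [Equiv.swap_apply_left]
      have hne : (z : ℕ) ≠ (p : ℕ) := fun h => hzp (Fin.val_injective h)
      constructor
      · intro _; exact ⟨by omega, hzp⟩
      · rintro ⟨-, -⟩; omega
    · rw [Equiv.swap_apply_of_ne_of_ne hza hzp]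
      have h1 : (z : ℕ) ≠ (a : ℕ) := fun h => hza (Fin.val_injective h)
      constructor
      · intro h; exact ⟨by omega, hzp⟩
      · rintro ⟨h3, -⟩; omega

private lemma swap_image_ge {m : ℕ} (k : ℕ) (hk : 1 ≤ k) (hkm : k ≤ m) (b q : Fin m)
    (hb : (b : ℕ) = m - k) (hq : m - k ≤ (q : ℕ)) :
    (Finset.univ.filter (fun i : Fin m => m - (k - 1) ≤ (i : ℕ))).image (Equiv.swap b q)
      = (Finset.univ.filter (fun i : Fin m => m - k ≤ (i : ℕ))) \ {q} := by
  ext z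
  rw [mem_image_perm, Equiv.symm_swap]
  simp only [Finset.mem_filter, Finset.mem_univ, true_and, Finset.mem_sdiff,
    Finset.mem_singleton]
  rcases eq_or_ne z q with rfl | hzq
  · rw [Equiv.swap_apply_right]
    constructor
    · intro h; exfalso; omega
    · rintro ⟨-, h⟩; exact absurd rfl h
  · rcases eq_or_ne z b with rfl | hzb
    · rw [Equiv.swap_apply_left]
      have hne : (z : ℕ) ≠ (q : ℕ) := fun h => hzq (Fin.val_injective h)
      constructor
      · intro _; exact ⟨by omega, hzq⟩
      · rintro ⟨-, -⟩; omega
    · rw [Equiv.swap_apply_of_ne_of_ne hzb hzq]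
      have h1 : (z : ℕ) ≠ (b : ℕ) := fun h => hzb (Fin.val_injective h)
      constructor
      · intro h; exact ⟨by omega, hzq⟩
      · rintro ⟨h3, -⟩; omega

private lemma card_filter_lt' (m k : ℕ) (hkm : k ≤ m) :
    (Finset.univ.filter (fun i : Fin m => (i : ℕ) < k)).card = k := by
  have h : (Finset.univ.filter (fun i : Fin m => (i : ℕ) < k)).image Fin.val
      = Finset.range k := by
    ext n
    simp only [Finset.mem_image, Finset.mem_filter, Finset.mem_univ, true_and,
      Finset.mem_range]
    constructor
    · rintro ⟨z, hz, rfl⟩; exact hz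
    · intro hn; exact ⟨⟨n, lt_of_lt_of_le hn hkm⟩, hn, rfl⟩
  have h2 := Finset.card_image_of_injective
    (Finset.univ.filter (fun i : Fin m => (i : ℕ) < k)) Fin.val_injective
  rw [h, Finset.card_range] at h2
  exact h2.symm

private lemma card_filter_ge' (m k : ℕ) (hkm : k ≤ m) :
    (Finset.univ.filter (fun i : Fin m => m - k ≤ (i : ℕ))).card = k := by
  have h : (Finset.univ.filter (fun i : Fin m => m - k ≤ (i : ℕ))).image Fin.val
      = Finset.Ico (m - k) m := by
    ext n
    simp only [Finset.mem_image, Finset.mem_filter, Finset.mem_univ, true_and,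
      Finset.mem_Ico]
    constructor
    · rintro ⟨z, hz, rfl⟩; exact ⟨hz, z.isLt⟩
    · rintro ⟨h1, h2⟩; exact ⟨⟨n, h2⟩, h1, rfl⟩
  have h2 := Finset.card_image_of_injective
    (Finset.univ.filter (fun i : Fin m => m - k ≤ (i : ℕ))) Fin.val_injective
  rw [h, Nat.card_Ico] at h2
  omega

private lemma image_mul_mul {α : Type*} [DecidableEq α] (e s1 s2 : Equiv.Perm α)
    (F : Finset α) :
    F.image ⇑(e * s1 * s2) = ((F.image ⇑s2).image ⇑s1).image ⇑e := by
  rw [Finset.image_image, Finset.image_image]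
  refine Finset.image_congr fun x _ => ?_
  simp [Equiv.Perm.mul_apply, Function.comp]

theorem separating_permutations_induction_step
    (m k ℓ : ℕ) (hm : 4 ≤ m) (hk : 2 ≤ k) (hk2 : k ≤ m / 2)
    (σ : Fin ℓ → Equiv.Perm (Fin m))
    (hσ : ∀ j, k ≤ j → j ≤ m / 2 → ∀ A : Finset (Fin m), A.card = j →
      ∃ i : Fin ℓ, A = prefixSet m (σ i) j ∨ A = suffixSet m (σ i) j) :
    ∃ τ : Fin ℓ → Equiv.Perm (Fin m),
      ∀ j, k - 1 ≤ j → j ≤ m / 2 → ∀ A : Finset (Fin m), A.card = j →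
        ∃ i : Fin ℓ, A = prefixSet m (τ i) j ∨ A = suffixSet m (τ i) j := by
  classical
  have hk1 : 1 ≤ k := by omega
  have h2k : k * 2 ≤ m := (Nat.le_div_iff_mul_le two_pos).mp hk2
  have hkm : k < m := by omega
  rcases Nat.eq_zero_or_pos ℓ with rfl | hℓ
  · refine ⟨fun i => i.elim0, ?_⟩
    intro j hj1 hj2 A hA
    obtain ⟨i, -⟩ := hσ k le_rfl hk2 (Finset.univ.filter (fun x : Fin m => (x : ℕ) < k))
      (card_filter_lt' m k (by omega))
    exact i.elim0
  have : Inhabited (Fin ℓ) := ⟨⟨0, hℓ⟩⟩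
  set a : Fin m := ⟨k - 1, by omega⟩ with haa
  set b : Fin m := ⟨m - k, by omega⟩ with hbb
  have ha : (a : ℕ) = k - 1 := rfl
  have hb : (b : ℕ) = m - k := rfl
  set Bs : Fin ℓ × Bool → Finset (Fin m) :=
    fun s => if s.2 then suffixSet m (σ s.1) k else prefixSet m (σ s.1) k with hBsdef
  have hBcard : ∀ s, (Bs s).card = k := by
    rintro ⟨i, c⟩
    cases c
    · show (prefixSet m (σ i) k).card = k
      rw [prefixSet, Finset.card_image_of_injective _ (Equiv.injective _),
        card_filter_lt' m k hkm.le]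
    · show (suffixSet m (σ i) k).card = k
      rw [suffixSet, Finset.card_image_of_injective _ (Equiv.injective _),
        card_filter_ge' m k hkm.le]
  set T : {A : Finset (Fin m) // A.card = k - 1} → Finset (Fin ℓ × Bool) :=
    fun A => Finset.univ.filter (fun s => A.val ⊆ Bs s) with hTdef
  have hmemT : ∀ A s, s ∈ T A ↔ A.val ⊆ Bs s := by
    intro A s; simp [hTdef]
  have hall : ∀ S : Finset {A : Finset (Fin m) // A.card = k - 1},
      S.card ≤ (S.biUnion T).card := by
    intro S
    have hdeg : ∀ A ∈ S, m - k + 1 ≤ (T A).card := by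
      intro A _
      have hAc : (A.val)ᶜ.card = m - k + 1 := by
        rw [Finset.card_compl, A.2, Fintype.card_fin]; omega
      rw [← hAc]
      have key : ∀ x : Fin m, ∃ s : Fin ℓ × Bool, x ∉ A.val → insert x A.val = Bs s := by
        intro x
        by_cases hx : x ∈ A.val
        · exact ⟨default, fun h => absurd hx h⟩
        · have hcard : (insert x A.val).card = k := by
            rw [Finset.card_insert_of_notMem hx, A.2]; omega
          obtain ⟨i, hi⟩ := hσ k le_rfl hk2 _ hcard
          rcases hi with hi | hi
          · exact ⟨(i, false), fun _ => hi⟩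
          · exact ⟨(i, true), fun _ => hi⟩
      choose g hg using key
      apply Finset.card_le_card_of_injOn g
      · intro x hx
        have hx' : x ∉ A.val := Finset.mem_compl.mp hx
        rw [Finset.mem_coe, hmemT, ← hg x hx']
        exact Finset.subset_insert _ _
      · intro x hx y hy hxy
        have hx' : x ∉ A.val := Finset.mem_compl.mp (Finset.mem_coe.mp hx)
        have hy' : y ∉ A.val := Finset.mem_compl.mp (Finset.mem_coe.mp hy)
        have heq : insert x A.val = insert y A.val := by
          rw [hg x hx', hxy, ← hg y hy']
        have hxin : x ∈ insert y A.val := heq ▸ Finset.mem_insert_self x A.val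
        rcases Finset.mem_insert.mp hxin with h | h
        · exact h
        · exact absurd h hx'
    have hslot : ∀ s ∈ S.biUnion T, (S.filter (fun A => s ∈ T A)).card ≤ k := by
      intro s _
      set g2 : {A : Finset (Fin m) // A.card = k - 1} → Fin m :=
        fun A => if h : (Bs s \ A.val).Nonempty then h.choose else a with hg2
      have hsub : ∀ A ∈ S.filter (fun A => s ∈ T A), A.val ⊆ Bs s := by
        intro A hA
        exact (hmemT A s).mp (Finset.mem_filter.mp hA).2
      have hkey : ∀ A ∈ S.filter (fun A => s ∈ T A), Bs s \ A.val = {g2 A} := by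
        intro A hA
        have hsd : (Bs s \ A.val).card = 1 := by
          rw [Finset.card_sdiff_of_subset (hsub A hA), hBcard, A.2]; omega
        obtain ⟨x, hx⟩ := Finset.card_eq_one.mp hsd
        have hne : (Bs s \ A.val).Nonempty := by
          rw [hx]; exact Finset.singleton_nonempty x
        have hgx : g2 A = x := by
          have hmem : g2 A ∈ Bs s \ A.val := by
            simp only [hg2, dif_pos hne]
            exact hne.choose_spec
          rw [hx] at hmem
          exact Finset.mem_singleton.mp hmem
        rw [hx, hgx]
      refine le_trans (Finset.card_le_card_of_injOn g2 ?_ ?_) (le_of_eq (hBcard s))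
      · intro A hA
        have h1 := hkey A hA
        have h2 : g2 A ∈ Bs s \ A.val := by
          rw [h1]; exact Finset.mem_singleton_self _
        exact (Finset.mem_sdiff.mp h2).1
      · intro A1 h1 A2 h2 heq
        have e1 := hkey A1 (Finset.mem_coe.mp h1)
        have e2 := hkey A2 (Finset.mem_coe.mp h2)
        have r1 : A1.val = Bs s \ {g2 A1} := by
          rw [← e1]
          exact (Finset.sdiff_sdiff_eq_self (hsub A1 (Finset.mem_coe.mp h1))).symm
        have r2 : A2.val = Bs s \ {g2 A2} := by
          rw [← e2]
          exact (Finset.sdiff_sdiff_eq_self (hsub A2 (Finset.mem_coe.mp h2))).symm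
        exact Subtype.ext (by rw [r1, r2, heq])
    have h1 : S.card * (m - k + 1) ≤ ∑ A ∈ S, (T A).card := by
      calc S.card * (m - k + 1) = ∑ _A ∈ S, (m - k + 1) := by
            rw [Finset.sum_const, smul_eq_mul]
        _ ≤ ∑ A ∈ S, (T A).card := Finset.sum_le_sum hdeg
    have h2 : ∑ A ∈ S, (T A).card ≤ (S.biUnion T).card * k := by
      have hTN : ∀ A ∈ S, T A ⊆ S.biUnion T := fun A hA => Finset.subset_biUnion_of_mem T hA
      calc ∑ A ∈ S, (T A).card
          = ∑ A ∈ S, ((S.biUnion T).filter (fun s => s ∈ T A)).card := by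
            refine Finset.sum_congr rfl fun A hA => ?_
            congr 1
            ext s
            simp only [Finset.mem_filter]
            exact ⟨fun h => ⟨hTN A hA h, h⟩, fun h => h.2⟩
        _ = ∑ A ∈ S, ∑ s ∈ S.biUnion T, (if s ∈ T A then 1 else 0) := by
            refine Finset.sum_congr rfl fun A _ => ?_
            rw [Finset.card_filter]
        _ = ∑ s ∈ S.biUnion T, ∑ A ∈ S, (if s ∈ T A then 1 else 0) := Finset.sum_comm
        _ = ∑ s ∈ S.biUnion T, (S.filter (fun A => s ∈ T A)).card := by
            refine Finset.sum_congr rfl fun s _ => ?_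
            rw [Finset.card_filter]
        _ ≤ ∑ s ∈ S.biUnion T, k := Finset.sum_le_sum hslot
        _ = (S.biUnion T).card * k := by rw [Finset.sum_const, smul_eq_mul]
    by_contra hc
    push_neg at hc
    have hlt : (S.biUnion T).card * k < S.card * (m - k + 1) := by
      calc (S.biUnion T).card * k < S.card * k :=
            Nat.mul_lt_mul_of_lt_of_le hc le_rfl (by omega)
        _ ≤ S.card * (m - k + 1) := Nat.mul_le_mul_left _ (by omega)
    exact absurd (le_trans h1 h2) (not_le.mpr hlt)
  obtain ⟨f, hfinj, hf⟩ := (Finset.all_card_le_biUnion_card_iff_exists_injective T).mp hall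
  have hext : ∀ (i : Fin ℓ) (F A : Finset (Fin m)), A.card + 1 = F.card →
      A ⊆ F.image (σ i) → ∃ p ∈ F, (F \ {p}).image (σ i) = A := by
    intro i F A hcard hsub
    have himg : (F.filter (fun x => σ i x ∈ A)).image (σ i) = A := by
      apply Finset.Subset.antisymm
      · intro y hy
        obtain ⟨x, hx, rfl⟩ := Finset.mem_image.mp hy
        exact (Finset.mem_filter.mp hx).2
      · intro y hy
        obtain ⟨x, hxF, hxy⟩ := Finset.mem_image.mp (hsub hy)
        exact Finset.mem_image.mpr
          ⟨x, Finset.mem_filter.mpr ⟨hxF, by rw [hxy]; exact hy⟩, hxy⟩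
    have hPcard : (F.filter (fun x => σ i x ∈ A)).card = A.card := by
      conv_rhs => rw [← himg]
      rw [Finset.card_image_of_injective _ (Equiv.injective _)]
    have hD : (F \ F.filter (fun x => σ i x ∈ A)).card = 1 := by
      rw [Finset.card_sdiff_of_subset (Finset.filter_subset _ _), hPcard]; omega
    obtain ⟨p, hp⟩ := Finset.card_eq_one.mp hD
    have hpF : p ∈ F := by
      have hmem : p ∈ F \ F.filter (fun x => σ i x ∈ A) := by
        rw [hp]; exact Finset.mem_singleton_self p
      exact (Finset.mem_sdiff.mp hmem).1
    refine ⟨p, hpF, ?_⟩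
    rw [← hp, Finset.sdiff_sdiff_eq_self (Finset.filter_subset _ _), himg]
  have hpm : ∀ i : Fin ℓ, ∃ p : Fin m, (p : ℕ) < k ∧
      ∀ A : {A : Finset (Fin m) // A.card = k - 1}, f A = (i, false) →
        ((Finset.univ.filter (fun x : Fin m => (x : ℕ) < k)) \ {p}).image (σ i) = A.val := by
    intro i
    by_cases h : ∃ A : {A : Finset (Fin m) // A.card = k - 1}, f A = (i, false)
    · obtain ⟨A, hA⟩ := h
      have hsub : A.val ⊆ prefixSet m (σ i) k := by
        have h0 := hf A
        rw [hA, hmemT] at h0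
        simpa [hBsdef] using h0
      obtain ⟨p, hpF, himg⟩ := hext i _ A.val
        (by rw [A.2, card_filter_lt' m k hkm.le]; omega) hsub
      refine ⟨p, (Finset.mem_filter.mp hpF).2, ?_⟩
      intro A' hA'
      have hAA : A' = A := hfinj (hA'.trans hA.symm)
      rw [hAA]
      exact himg
    · exact ⟨a, by rw [ha]; omega, fun A hA => absurd ⟨A, hA⟩ h⟩
  have hqm : ∀ i : Fin ℓ, ∃ q : Fin m, m - k ≤ (q : ℕ) ∧
      ∀ A : {A : Finset (Fin m) // A.card = k - 1}, f A = (i, true) →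
        ((Finset.univ.filter (fun x : Fin m => m - k ≤ (x : ℕ))) \ {q}).image (σ i) = A.val := by
    intro i
    by_cases h : ∃ A : {A : Finset (Fin m) // A.card = k - 1}, f A = (i, true)
    · obtain ⟨A, hA⟩ := h
      have hsub : A.val ⊆ suffixSet m (σ i) k := by
        have h0 := hf A
        rw [hA, hmemT] at h0
        simpa [hBsdef] using h0
      obtain ⟨q, hqF, himg⟩ := hext i _ A.val
        (by rw [A.2, card_filter_ge' m k hkm.le]; omega) hsub
      refine ⟨q, (Finset.mem_filter.mp hqF).2, ?_⟩
      intro A' hA'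
      have hAA : A' = A := hfinj (hA'.trans hA.symm)
      rw [hAA]
      exact himg
    · exact ⟨b, by rw [hb], fun A hA => absurd ⟨A, hA⟩ h⟩
  choose pm hpm1 hpm2 using hpm
  choose qm hqm1 hqm2 using hqm
  refine ⟨fun i => σ i * Equiv.swap a (pm i) * Equiv.swap b (qm i), ?_⟩
  have hpres : ∀ i j, k ≤ j → j ≤ m / 2 →
      prefixSet m (σ i * Equiv.swap a (pm i) * Equiv.swap b (qm i)) j = prefixSet m (σ i) j ∧
      suffixSet m (σ i * Equiv.swap a (pm i) * Equiv.swap b (qm i)) j = suffixSet m (σ i) j := by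
    intro i j hj1 hj2
    have hq := hqm1 i
    have hp := hpm1 i
    constructor
    · simp only [prefixSet]
      rw [image_mul_mul]
      have e2 : (Finset.univ.filter (fun x : Fin m => (x : ℕ) < j)).image (Equiv.swap b (qm i))
          = Finset.univ.filter (fun x : Fin m => (x : ℕ) < j) := by
        apply image_swap_of_iff
        simp only [Finset.mem_filter, Finset.mem_univ, true_and]
        omega
      have e1 : (Finset.univ.filter (fun x : Fin m => (x : ℕ) < j)).image (Equiv.swap a (pm i))
          = Finset.univ.filter (fun x : Fin m => (x : ℕ) < j) := by
        apply image_swap_of_iff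
        simp only [Finset.mem_filter, Finset.mem_univ, true_and]
        omega
      rw [e2, e1]
    · simp only [suffixSet]
      rw [image_mul_mul]
      have e2 : (Finset.univ.filter (fun x : Fin m => m - j ≤ (x : ℕ))).image (Equiv.swap b (qm i))
          = Finset.univ.filter (fun x : Fin m => m - j ≤ (x : ℕ)) := by
        apply image_swap_of_iff
        simp only [Finset.mem_filter, Finset.mem_univ, true_and]
        omega
      have e1 : (Finset.univ.filter (fun x : Fin m => m - j ≤ (x : ℕ))).image (Equiv.swap a (pm i))
          = Finset.univ.filter (fun x : Fin m => m - j ≤ (x : ℕ)) := by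
        apply image_swap_of_iff
        simp only [Finset.mem_filter, Finset.mem_univ, true_and]
        omega
      rw [e2, e1]
  intro j hj1 hj2 A hA
  rcases Nat.lt_or_ge j k with hjk | hjk
  · have hjeq : j = k - 1 := by omega
    subst hjeq
    rcases hfa : f ⟨A, hA⟩ with ⟨i, c⟩
    cases c
    · refine ⟨i, Or.inl ?_⟩
      have himg := hpm2 i ⟨A, hA⟩ hfa
      simp only [prefixSet]
      rw [image_mul_mul]
      have e2 : (Finset.univ.filter (fun x : Fin m => (x : ℕ) < k - 1)).image
          (Equiv.swap b (qm i))
          = Finset.univ.filter (fun x : Fin m => (x : ℕ) < k - 1) := by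
        apply image_swap_of_iff
        have hq := hqm1 i
        simp only [Finset.mem_filter, Finset.mem_univ, true_and]
        omega
      rw [e2, swap_image_lt k hk1 a (pm i) ha (hpm1 i), himg]
    · refine ⟨i, Or.inr ?_⟩
      have himg := hqm2 i ⟨A, hA⟩ hfa
      simp only [suffixSet]
      rw [image_mul_mul]
      rw [swap_image_ge k hk1 hkm.le b (qm i) hb (hqm1 i)]
      have e1 : ((Finset.univ.filter (fun x : Fin m => m - k ≤ (x : ℕ))) \ {qm i}).image
          (Equiv.swap a (pm i))
          = (Finset.univ.filter (fun x : Fin m => m - k ≤ (x : ℕ))) \ {qm i} := by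
        apply image_swap_of_iff
        have hp := hpm1 i
        simp only [Finset.mem_sdiff, Finset.mem_filter, Finset.mem_univ, true_and,
          Finset.mem_singleton]
        constructor
        · rintro ⟨h1, -⟩; exfalso; omega
        · rintro ⟨h1, -⟩; exfalso; omega
      rw [e1, himg]
  · obtain ⟨i, hi⟩ := hσ j hjk hj2 A hA
    obtain ⟨hP, hS⟩ := hpres i j hjk hj2
    refine ⟨i, ?_⟩
    rcases hi with hi | hi
    · exact Or.inl (by rw [hP]; exact hi)
    · exact Or.inr (by rw [hS]; exact hi)
end
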